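/- Let C = C₁η₁ ⊕ ⋯ ⊕ C₅η₅ be a cyclic code of length n over R, with gᵢ(x) the generator polynomial of the cyclic code Cᵢ over F_q. Then C = ⟨g(x)⟩ in R[x]/⟨xⁿ-1⟩, where g(x) = η₁g₁(x) + η₂g₂(x) + η₃g₃(x) + η₄g₄(x) + η₅g₅(x), this g is unique with these properties, and g(x) divides xⁿ - 1 in R[x]. -/

import Mathlib

open Polynomial

set_option synthInstance.maxHeartbeats 1000000
set_option maxHeartbeats 1000000

/-- The ring `R = F_q[v]/⟨v⁵ - v⟩`. -/
noncomputable abbrev Rring (F : Type*) [Field F] : Type _ :=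
  F[X] ⧸ Ideal.span {(X : F[X]) ^ 5 - X}

noncomputable instance Rring.instCommRing (F : Type*) [Field F] : CommRing (Rring F) :=
  Ideal.Quotient.commRing _

/-- let `C = C₁η₁ ⊕ ⋯ ⊕ C₅η₅` be a cyclic code of length `n` over `R`,
viewed as an ideal of `R[x]/⟨xⁿ-1⟩`, with `gᵢ(x)` the (monic) generator polynomial of
the cyclic code `Cᵢ` over `F_q`. Then `C = ⟨g(x)⟩` where
`g(x) = η₁g₁(x) + ⋯ + η₅g₅(x)`, this `g` is unique (it does not depend on the choice of
generator polynomials, which are unique), and `g(x)` divides `xⁿ - 1` in `R[x]`. -/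
theorem stmt14 (p r n : ℕ) (hn : 0 < n) (hp : p.Prime) (hodd : Odd p)
    (h4 : 4 ∣ (p - 1)) (hr : 0 < r)
    (F : Type*) [Field F] [Fintype F] (hcard : Fintype.card F = p ^ r)
    (η : Fin 5 → Rring F)
    (hne : ∀ i, η i ≠ 0) (hidem : ∀ i, η i ^ 2 = η i)
    (horth : ∀ i j, i ≠ j → η i * η j = 0) (hsum : ∑ i, η i = 1)
    (g : Fin 5 → F[X])
    (hgmonic : ∀ i, (g i).Monic) (hgdvd : ∀ i, g i ∣ (X : F[X]) ^ n - 1)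
    (Cc : Ideal ((Rring F)[X] ⧸ Ideal.span {(X : (Rring F)[X]) ^ n - 1}))
    (hC : ∀ a, a ∈ Cc ↔ ∃ c : Fin 5 → F[X], (∀ i, g i ∣ c i) ∧
      a = Ideal.Quotient.mk (Ideal.span {(X : (Rring F)[X]) ^ n - 1})
            (∑ i, Polynomial.C (η i) * (c i).map (algebraMap F (Rring F)))) :
    Cc = Ideal.span {Ideal.Quotient.mk (Ideal.span {(X : (Rring F)[X]) ^ n - 1})
          (∑ i, Polynomial.C (η i) * (g i).map (algebraMap F (Rring F)))} ∧
    (∑ i, Polynomial.C (η i) * (g i).map (algebraMap F (Rring F))) ∣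
        ((X : (Rring F)[X]) ^ n - 1) ∧
    (∀ g' : Fin 5 → F[X],
      (∀ i, (g' i).Monic ∧ g' i ∣ (X : F[X]) ^ n - 1 ∧ ∀ c : F[X], (g i ∣ c ↔ g' i ∣ c)) →
      (∑ i, Polynomial.C (η i) * (g' i).map (algebraMap F (Rring F))) =
        ∑ i, Polynomial.C (η i) * (g i).map (algebraMap F (Rring F))) := by
  classical
  set φ := algebraMap F (Rring F) with hφ
  have key : ∀ c d : Fin 5 → F[X],
      (∑ i, Polynomial.C (η i) * (c i).map φ) * (∑ i, Polynomial.C (η i) * (d i).map φ) =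
      ∑ i, Polynomial.C (η i) * ((c i * d i).map φ) := by
    intro c d
    rw [Finset.sum_mul_sum]
    refine Finset.sum_congr rfl fun i _ => ?_
    rw [Finset.sum_eq_single i]
    · rw [mul_mul_mul_comm, ← Polynomial.C_mul, ← sq, hidem i, ← Polynomial.map_mul]
    · intro j _ hji
      rw [mul_mul_mul_comm, ← Polynomial.C_mul, horth i j (Ne.symm hji), Polynomial.C_0,
        zero_mul]
    · intro hmem; exact absurd (Finset.mem_univ i) hmem
  have hsum1 : (∑ i, Polynomial.C (η i)) = (1 : (Rring F)[X]) := by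
    rw [← Polynomial.C_1, ← hsum, map_sum]
  have hXn : ((X : F[X]) ^ n - 1).map φ = (X : (Rring F)[X]) ^ n - 1 := by
    simp [Polynomial.map_sub, Polynomial.map_pow]
  choose h hh using hgdvd
  have hdvd : (∑ i, Polynomial.C (η i) * (g i).map φ) ∣ ((X : (Rring F)[X]) ^ n - 1) := by
    refine ⟨∑ i, Polynomial.C (η i) * (h i).map φ, ?_⟩
    rw [key]
    symm
    calc ∑ i, Polynomial.C (η i) * ((g i * h i).map φ)
        = ∑ i, Polynomial.C (η i) * (((X : F[X]) ^ n - 1).map φ) := by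
          refine Finset.sum_congr rfl fun i _ => ?_
          rw [← hh i]
      _ = (∑ i, Polynomial.C (η i)) * (((X : F[X]) ^ n - 1).map φ) := by
          rw [Finset.sum_mul]
      _ = (X : (Rring F)[X]) ^ n - 1 := by rw [hsum1, one_mul, hXn]
  refine ⟨le_antisymm ?_ ?_, hdvd, ?_⟩
  · intro a ha
    obtain ⟨c, hc, rfl⟩ := (hC _).mp ha
    refine (Ideal.mem_span_singleton (α := (Rring F)[X] ⧸ Ideal.span {(X : (Rring F)[X]) ^ n - 1})).mpr ?_
    choose d hd using hc
    refine ⟨Ideal.Quotient.mk _ (∑ i, Polynomial.C (η i) * (d i).map φ), ?_⟩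
    rw [← map_mul, key]
    congr 1
    refine Finset.sum_congr rfl fun i _ => ?_
    rw [← hd i]
  · rw [Ideal.span_le, Set.singleton_subset_iff]
    exact (hC _).mpr ⟨g, fun i => dvd_rfl, rfl⟩
  · intro g' hg'
    refine Finset.sum_congr rfl fun i _ => ?_
    have h1 : g i ∣ g' i := ((hg' i).2.2 (g' i)).mpr dvd_rfl
    have h2 : g' i ∣ g i := ((hg' i).2.2 (g i)).mp dvd_rfl
    rw [Polynomial.eq_of_monic_of_associated (hg' i).1 (hgmonic i)
      (associated_of_dvd_dvd h2 h1)]
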